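/- Let q be a natural join query with connected join graph. If every connected join expression of q is monotone on every fully reduced instance, then every connected subjoin of q is safe. -/

import Mathlib

namespace JoinQuery

universe u

variable {ι : Type} {α : Type}

/-- A *tuple* over a finite set `X` of attributes, with values in the domain `D`:
a function assigning a domain value to each attribute of `X`. -/
def Tuple (D : Type u) {α : Type} (X : Finset α) : Type u := {a // a ∈ X} → D

/-- Projection: the restriction of a tuple over `X` to a subset `Y ⊆ X` of the attributes. -/
def restrict {D : Type u} {X Y : Finset α} (h : Y ⊆ X) (t : Tuple D X) : Tuple D Y :=
  fun a => t ⟨a.1, h a.2⟩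

/-- A database instance for the natural join query whose relation symbols are the elements
of `ι` with attribute sets given by `attr`: a finite set of tuples for every relation. -/
structure Inst (attr : ι → Finset α) (D : Type u) where
  rel : ∀ R : ι, Set (Tuple D (attr R))
  finite : ∀ R : ι, (rel R).Finite

/-- The set of attributes of the (sub)query given by the set `S` of relations. -/
def attrsOf [DecidableEq α] (attr : ι → Finset α) (S : Finset ι) : Finset α :=
  S.biUnion attr

theorem attr_subset_attrsOf [DecidableEq α] (attr : ι → Finset α) {S : Finset ι} {R : ι}
    (hR : R ∈ S) : attr R ⊆ attrsOf attr S :=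
  Finset.subset_biUnion_of_mem attr hR

theorem attrsOf_mono [DecidableEq α] (attr : ι → Finset α) {S₁ S₂ : Finset ι} (h : S₁ ⊆ S₂) :
    attrsOf attr S₁ ⊆ attrsOf attr S₂ :=
  Finset.biUnion_subset_biUnion_of_subset_left attr h

/-- The output of the natural join of the relations in `S`, on the instance `I`:
all tuples over the attributes of `S` whose restriction to each relation `R ∈ S`
belongs to `I.rel R`. -/
def output [DecidableEq α] {D : Type u} (attr : ι → Finset α) (I : Inst attr D)
    (S : Finset ι) : Set (Tuple D (attrsOf attr S)) :=
  {t | ∀ (R : ι) (hR : R ∈ S), restrict (attr_subset_attrsOf attr hR) t ∈ I.rel R}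

/-- The output `q(I)` of the full query (the natural join of all relations). -/
def fullOutput [Fintype ι] [DecidableEq α] {D : Type u} (attr : ι → Finset α)
    (I : Inst attr D) : Set (Tuple D (attrsOf attr Finset.univ)) :=
  output attr I Finset.univ

/-- An instance is *fully reduced* if every relation equals the projection of the
full output onto its attributes. -/
def FullyReduced [Fintype ι] [DecidableEq α] {D : Type u} (attr : ι → Finset α)
    (I : Inst attr D) : Prop :=
  ∀ R : ι,
    I.rel R = restrict (attr_subset_attrsOf attr (Finset.mem_univ R)) '' fullOutput attr I

/-- The subjoin given by the set `S` of relations is *safe*: on every fully reduced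
instance, its output is the projection of the full output onto its attributes. -/
def Safe [Fintype ι] [DecidableEq α] (attr : ι → Finset α) (S : Finset ι) : Prop :=
  ∀ (D : Type u) (I : Inst attr D), FullyReduced attr I →
    output attr I S =
      restrict (attrsOf_mono attr (Finset.subset_univ S)) '' fullOutput attr I

/-- The *join graph* of the query: vertices are the relations, two distinct relations
being adjacent iff they share an attribute. -/
def joinGraph [DecidableEq α] (attr : ι → Finset α) : SimpleGraph ι where
  Adj R S := R ≠ S ∧ (attr R ∩ attr S).Nonempty
  symm := by
    constructor
    intro R S h
    exact ⟨h.1.symm, by rw [Finset.inter_comm]; exact h.2⟩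
  loopless := by constructor; intro R h; exact h.1 rfl

/-- `T` is a spanning tree of the graph `G` (a tree on the same vertex set all of whose
edges are edges of `G`). -/
def IsSpanningTree (G T : SimpleGraph ι) : Prop :=
  T ≤ G ∧ T.IsTree

/-- `T` is a *join tree* of the query: a spanning tree of the join graph such that, for
every attribute `A` (occurring in the query), the relations containing `A` induce a
connected subgraph of `T`. -/
def IsJoinTree [DecidableEq α] (attr : ι → Finset α) (T : SimpleGraph ι) : Prop :=
  IsSpanningTree (joinGraph attr) T ∧
    ∀ A : α, (∃ R : ι, A ∈ attr R) → (T.induce {R : ι | A ∈ attr R}).Connected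

/-- The query is (α-)acyclic iff it has a join tree. -/
def Acyclic [DecidableEq α] (attr : ι → Finset α) : Prop :=
  ∃ T : SimpleGraph ι, IsJoinTree attr T

/-- The weight of an edge `{R, S}`: the number of shared attributes `|attr R ∩ attr S|`. -/
def edgeWeight [DecidableEq α] (attr : ι → Finset α) : Sym2 ι → ℕ :=
  Sym2.lift ⟨fun R S => (attr R ∩ attr S).card, fun R S => by simp [Finset.inter_comm]⟩

/-- The total weight of (the edges of) a graph `T`. -/
noncomputable def weight [DecidableEq α] (attr : ι → Finset α) (T : SimpleGraph ι) : ℕ :=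
  ∑ᶠ e ∈ T.edgeSet, edgeWeight attr e

/-- `T` is a maximum spanning tree of the weighted join graph. -/
def IsMaxSpanningTree [DecidableEq α] (attr : ι → Finset α) (T : SimpleGraph ι) : Prop :=
  IsSpanningTree (joinGraph attr) T ∧
    ∀ T' : SimpleGraph ι, IsSpanningTree (joinGraph attr) T' →
      weight attr T' ≤ weight attr T

/-- γ-acyclicity: α-acyclicity together with the absence of a γ-cycle of size 3,
i.e. of three distinct relations `R, S, T` and three distinct attributes `x, y, z`
with `x, y ∈ attr R`, `y, z ∈ attr S` and `x, y, z ∈ attr T`. -/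
def GammaAcyclic [DecidableEq α] (attr : ι → Finset α) : Prop :=
  Acyclic attr ∧
    ¬ ∃ (R S T : ι) (x y z : α),
        R ≠ S ∧ R ≠ T ∧ S ≠ T ∧ x ≠ y ∧ x ≠ z ∧ y ≠ z ∧
        x ∈ attr R ∧ y ∈ attr R ∧ y ∈ attr S ∧ z ∈ attr S ∧
        x ∈ attr T ∧ y ∈ attr T ∧ z ∈ attr T

/-- A *connected subjoin*: a nonempty set of relations inducing a connected subgraph
of the join graph. -/
def ConnectedSubjoin [DecidableEq α] (attr : ι → Finset α) (S : Finset ι) : Prop :=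
  S.Nonempty ∧ ((joinGraph attr).induce (S : Set ι)).Connected

/-- The number of edges of `T` whose both endpoints contain the attribute `A`. -/
noncomputable def eCount (attr : ι → Finset α) (T : SimpleGraph ι) (A : α) : ℕ :=
  {e ∈ T.edgeSet | ∀ R ∈ e, A ∈ attr R}.ncard

/-- The number of relations whose attribute set contains `A`. -/
noncomputable def nCount (attr : ι → Finset α) (A : α) : ℕ :=
  {R : ι | A ∈ attr R}.ncard

/-- A (binary) join expression over the relation symbols `ι`. -/
inductive JoinExpr (ι : Type) : Type where
  | leaf : ι → JoinExpr ι
  | node : JoinExpr ι → JoinExpr ι → JoinExpr ι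

namespace JoinExpr

/-- The list of leaves of a join expression. -/
def leaves {ι : Type} : JoinExpr ι → List ι
  | leaf R => [R]
  | node l r => l.leaves ++ r.leaves

/-- The set of relations appearing in a join expression. -/
def rels {ι : Type} [DecidableEq ι] : JoinExpr ι → Finset ι
  | leaf R => {R}
  | node l r => l.rels ∪ r.rels

/-- The leaves of the expression are exactly the relations of the query,
each occurring once. -/
def Complete {ι : Type} (θ : JoinExpr ι) : Prop :=
  θ.leaves.Nodup ∧ ∀ R : ι, R ∈ θ.leaves

/-- The expression has no Cartesian products: at every internal node, the relations of the
two subtrees are joined by at least one edge of `G`. -/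
def ConnectedExpr {ι : Type} [DecidableEq ι] (G : SimpleGraph ι) : JoinExpr ι → Prop
  | leaf _ => True
  | node l r =>
      (∃ R ∈ l.rels, ∃ S ∈ r.rels, G.Adj R S) ∧ ConnectedExpr G l ∧ ConnectedExpr G r

/-- The expression is *monotone* on the instance `I`: at every internal node
`θ' = θ'₁ ⋈ θ'₂`, the output of each child equals the projection of the output of the
node onto the child's attributes (no tuple of either input is removed by the join). -/
def MonotoneOn {ι α : Type} [DecidableEq ι] [DecidableEq α] {D : Type u}
    (attr : ι → Finset α) (I : Inst attr D) : JoinExpr ι → Prop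
  | leaf _ => True
  | node l r =>
      output attr I l.rels =
        restrict (attrsOf_mono attr Finset.subset_union_left) ''
          output attr I (l.rels ∪ r.rels) ∧
      output attr I r.rels =
        restrict (attrsOf_mono attr Finset.subset_union_right) ''
          output attr I (l.rels ∪ r.rels) ∧
      MonotoneOn attr I l ∧ MonotoneOn attr I r

end JoinExpr

/-- Two tuples (over possibly different attribute sets) *agree* on their common attributes. -/
def AgreeOn {α : Type} {D : Type u} {X Y : Finset α} (t : Tuple D X) (s : Tuple D Y) : Prop :=
  ∀ (a : α) (ha : a ∈ X) (hb : a ∈ Y), t ⟨a, ha⟩ = s ⟨a, hb⟩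

/-- The semi-join `R ⋉ S` on the instance `I`: the tuples of `I.rel R` having a match
in `I.rel S` (a tuple agreeing with them on `attr R ∩ attr S`). -/
def semiJoin {D : Type u} (attr : ι → Finset α) (I : Inst attr D) (R S : ι) :
    Set (Tuple D (attr R)) :=
  {t ∈ I.rel R | ∃ s ∈ I.rel S, AgreeOn t s}

/-- The instance obtained from `I` by replacing the content of relation `R` with the
semi-join `R ⋉ S` (all other relations unchanged). -/
def Inst.semiJoinUpdate [DecidableEq ι] {attr : ι → Finset α} {D : Type u}
    (I : Inst attr D) (R S : ι) : Inst attr D where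
  rel := Function.update I.rel R (semiJoin attr I R S)
  finite := by
    intro R'
    rcases eq_or_ne R' R with rfl | h
    · rw [Function.update_self]
      exact (I.finite R').subset fun t ht => ht.1
    · rw [Function.update_of_ne h]
      exact I.finite R'

/-- The forward pass of the semi-join phase: process the vertices in the order given by
the list `L`; when processing a vertex `R`, successively replace its content by `R ⋉ S`
for each of its children `S` (listed by `childList R`). -/
def forwardPass [DecidableEq ι] {attr : ι → Finset α} {D : Type u}
    (I : Inst attr D) (L : List ι) (childList : ι → List ι) : Inst attr D :=
  L.foldl (fun J R => (childList R).foldl (fun K S => K.semiJoinUpdate R S) J) I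

/-- The backward pass of the semi-join phase: process the vertices in the order given by
the list `L`; when processing a non-root vertex `R`, replace its content by `R ⋉ par R`. -/
def backwardPass [DecidableEq ι] {attr : ι → Finset α} {D : Type u}
    (I : Inst attr D) (L : List ι) (r : ι) (par : ι → ι) : Inst attr D :=
  L.foldl (fun J R => if R = r then J else J.semiJoinUpdate R (par R)) I

end JoinQuery

namespace JoinQuery

universe v

section Aux

variable {ι : Type} {α : Type}

theorem restrict_restrict' {D : Type v} {X Y Z : Finset α} (h : Z ⊆ Y) (h' : Y ⊆ X)
    (t : Tuple D X) : restrict h (restrict h' t) = restrict (h.trans h') t := rfl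

theorem restrict_self' {D : Type v} {X : Finset α} (h : X ⊆ X) (t : Tuple D X) :
    restrict h t = t := rfl

theorem rels_nonempty [DecidableEq ι] : ∀ θ : JoinExpr ι, θ.rels.Nonempty
  | .leaf R => ⟨R, by simp [JoinExpr.rels]⟩
  | .node l r => (rels_nonempty l).mono (by simp [JoinExpr.rels])

/-- `θ'` is obtained from `θ` by repeatedly joining single leaves on the right. -/
inductive Spine : JoinExpr ι → JoinExpr ι → Prop
  | refl (θ : JoinExpr ι) : Spine θ θ
  | step {θ θ' : JoinExpr ι} (b : ι) : Spine θ θ' → Spine θ (.node θ' (.leaf b))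

theorem Spine.trans {θ₁ θ₂ θ₃ : JoinExpr ι} (h1 : Spine θ₁ θ₂) (h2 : Spine θ₂ θ₃) :
    Spine θ₁ θ₃ := by
  induction h2 with
  | refl => exact h1
  | step b _ ih => exact .step b ih

theorem Spine.rels_subset [DecidableEq ι] {θ θ' : JoinExpr ι} (h : Spine θ θ') :
    θ.rels ⊆ θ'.rels := by
  induction h with
  | refl => exact Finset.Subset.refl _
  | step b _ ih => exact ih.trans (by simp [JoinExpr.rels])

theorem output_eq_of_spine [DecidableEq ι] [DecidableEq α] {D : Type v}
    {attr : ι → Finset α} {I : Inst attr D} {θ θ' : JoinExpr ι}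
    (hsp : Spine θ θ') {U : Finset ι} (hU : θ'.rels = U) :
    JoinExpr.MonotoneOn attr I θ' →
    ∀ h : attrsOf attr θ.rels ⊆ attrsOf attr U,
      output attr I θ.rels = restrict h '' output attr I U := by
  subst hU
  induction hsp with
  | refl =>
      intro _ h
      have hid : (restrict h : Tuple D _ → Tuple D _) = id := funext (restrict_self' h)
      rw [hid, Set.image_id]
  | step b hsp ih =>
      intro hm h
      obtain ⟨h1, _, hml, _⟩ := hm
      have key := ih hml (attrsOf_mono attr hsp.rels_subset)
      rw [key, h1, Set.image_image]
      rfl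

theorem walk_crossing {G : SimpleGraph ι} {s : Set ι} [DecidableEq ι] {A : Finset ι} :
    ∀ {x y : s} (_ : (G.induce s).Walk x y), x.1 ∈ A → y.1 ∉ A →
      ∃ a ∈ A, ∃ b ∈ s, b ∉ A ∧ G.Adj a b := by
  intro x y w
  induction w with
  | nil => intro hx hy; exact absurd hx hy
  | cons hadj p ih =>
      intro hx hy
      rename_i u v _
      by_cases hv : v.1 ∈ A
      · exact ih hv hy
      · exact ⟨u.1, hx, v.1, v.2, hv, hadj⟩

theorem crossing {G : SimpleGraph ι} [DecidableEq ι] {S : Finset ι}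
    (hS : (G.induce (↑S : Set ι)).Connected) {A : Finset ι} (hA : A.Nonempty)
    (hAS : A ⊆ S) (hne : ¬ S ⊆ A) :
    ∃ a ∈ A, ∃ b ∈ (↑S : Set ι), b ∉ A ∧ G.Adj a b := by
  obtain ⟨a, ha⟩ := hA
  obtain ⟨b, hbS, hbA⟩ := Finset.not_subset.mp hne
  obtain ⟨w⟩ := hS.preconnected ⟨a, hAS ha⟩ ⟨b, hbS⟩
  exact walk_crossing w ha hbA

theorem grow [DecidableEq ι] [DecidableEq α] {attr : ι → Finset α} {S : Finset ι}
    (hS : ((joinGraph attr).induce (↑S : Set ι)).Connected) :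
    ∀ (n : ℕ) (θ : JoinExpr ι), (S \ θ.rels).card = n → θ.rels ⊆ S →
      θ.leaves.Nodup → (∀ R, R ∈ θ.leaves ↔ R ∈ θ.rels) →
      JoinExpr.ConnectedExpr (joinGraph attr) θ →
      ∃ θ' : JoinExpr ι, Spine θ θ' ∧ θ'.rels = S ∧ θ'.leaves.Nodup ∧
        (∀ R, R ∈ θ'.leaves ↔ R ∈ θ'.rels) ∧
        JoinExpr.ConnectedExpr (joinGraph attr) θ' := by
  intro n
  induction n with
  | zero =>
      intro θ hcard hsub hnod hmem hconn
      have : S ⊆ θ.rels := by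
        rw [← Finset.sdiff_eq_empty_iff_subset, ← Finset.card_eq_zero, hcard]
      exact ⟨θ, .refl θ, Finset.Subset.antisymm hsub this, hnod, hmem, hconn⟩
  | succ n ih =>
      intro θ hcard hsub hnod hmem hconn
      have hne : ¬ S ⊆ θ.rels := by
        intro hc
        rw [Finset.sdiff_eq_empty_iff_subset.mpr hc] at hcard
        simp at hcard
      obtain ⟨a, ha, b, hbS, hbA, hadj⟩ := crossing hS (rels_nonempty θ) hsub hne
      have hbS' : b ∈ S := hbS
      set θ₁ : JoinExpr ι := .node θ (.leaf b) with hθ₁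
      have hrels₁ : θ₁.rels = θ.rels ∪ {b} := rfl
      have hcard₁ : (S \ θ₁.rels).card = n := by
        have he : S \ θ₁.rels = (S \ θ.rels).erase b := by
          ext x
          simp only [hrels₁, Finset.mem_sdiff, Finset.mem_union, Finset.mem_singleton,
            Finset.mem_erase]
          tauto
        rw [he, Finset.card_erase_of_mem (Finset.mem_sdiff.mpr ⟨hbS', hbA⟩), hcard]
        omega
      have hsub₁ : θ₁.rels ⊆ S := by
        rw [hrels₁]
        exact Finset.union_subset hsub (Finset.singleton_subset_iff.mpr hbS')
      have hleaves₁ : θ₁.leaves = θ.leaves ++ [b] := rfl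
      have hnod₁ : θ₁.leaves.Nodup := by
        rw [hleaves₁, List.nodup_append]
        refine ⟨hnod, List.nodup_singleton b, ?_⟩
        intro x hx
        simp only [List.mem_singleton]
        intro y hy hxb
        subst hy
        subst hxb
        exact hbA ((hmem x).mp hx)
      have hmem₁ : ∀ R, R ∈ θ₁.leaves ↔ R ∈ θ₁.rels := by
        intro R
        rw [hleaves₁, hrels₁]
        simp [List.mem_append, hmem R, or_comm]
      have hconn₁ : JoinExpr.ConnectedExpr (joinGraph attr) θ₁ :=
        ⟨⟨a, ha, b, by simp [JoinExpr.rels], hadj⟩, hconn, trivial⟩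
      obtain ⟨θ', hsp, h1, h2, h3, h4⟩ := ih θ₁ hcard₁ hsub₁ hnod₁ hmem₁ hconn₁
      exact ⟨θ', Spine.trans (.step b (.refl θ)) hsp, h1, h2, h3, h4⟩

end Aux

/- STATEMENT 8 -/
theorem safe_of_monotone {ι α : Type} [Fintype ι] [DecidableEq ι] [DecidableEq α]
    (attr : ι → Finset α) (hattr : ∀ R : ι, (attr R).Nonempty)
    (hconn : (joinGraph attr).Connected)
    (hmono : ∀ θ : JoinExpr ι, θ.Complete → JoinExpr.ConnectedExpr (joinGraph attr) θ →
      ∀ (D : Type v) (I : Inst attr D), FullyReduced attr I →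
        JoinExpr.MonotoneOn attr I θ) :
    ∀ S : Finset ι, ConnectedSubjoin attr S → Safe.{v} attr S := by
  rintro S ⟨hSne, hSconn⟩ D I hred
  obtain ⟨R₀, hR₀⟩ := hSne
  obtain ⟨θS, _, hrelsS, hnodS, hmemS, hconnS⟩ :=
    grow hSconn (S \ (JoinExpr.leaf R₀).rels).card (.leaf R₀) rfl
      (by simp [JoinExpr.rels, hR₀]) (by simp [JoinExpr.leaves])
      (by intro R; simp [JoinExpr.leaves, JoinExpr.rels]) trivial
  have huniv : ((joinGraph attr).induce (↑(Finset.univ : Finset ι) : Set ι)).Connected := by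
    rw [Finset.coe_univ]
    exact ((joinGraph attr).induceUnivIso).connected_iff.mpr hconn
  obtain ⟨θF, hspine, hrelsF, hnodF, hmemF, hconnF⟩ :=
    grow huniv (Finset.univ \ θS.rels).card θS rfl (Finset.subset_univ _) hnodS hmemS hconnS
  have hcomp : θF.Complete := ⟨hnodF, fun R => (hmemF R).mpr (hrelsF ▸ Finset.mem_univ R)⟩
  have hmonoF := hmono θF hcomp hconnF D I hred
  subst hrelsS
  exact output_eq_of_spine hspine hrelsF hmonoF _

end JoinQuery
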